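/- Let h be a positive integer, S an inverse-closed subset of Z_{4h} not containing 0, and K a subgroup of Z_{4h} whose order is twice an odd integer; set K_o = K \ 2K. If (S \ K_o) + ⟨h⟩ ⊆ S ∪ K_o, then the Cayley graph Cay(Z_{4h}, (S \ {2h}) + 2h) has an automorphism fixing 0 but moving 2h. -/
import Mathlib



open SimpleGraph Pointwise

/-- `2K = {2k : k ∈ K}` for a subgroup `K`. -/
def twoMul {n : ℕ} (K : AddSubgroup (ZMod n)) : Set (ZMod n) :=
  (fun k => 2 * k) '' (K : Set (ZMod n))

/-- `K_o = K \ 2K`. -/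
def oddPart {n : ℕ} (K : AddSubgroup (ZMod n)) : Set (ZMod n) :=
  (K : Set (ZMod n)) \ twoMul K

theorem stmt17 (h : ℕ) (hh : 0 < h) (S : Set (ZMod (4 * h)))
    (hS : ∀ s ∈ S, -s ∈ S) (h0 : (0 : ZMod (4 * h)) ∉ S)
    (K : AddSubgroup (ZMod (4 * h)))
    (hK : ∃ k : ℕ, Odd k ∧ Nat.card K = 2 * k)
    (hsub : (S \ oddPart K) +
        ((AddSubgroup.zmultiples ((h : ZMod (4 * h)))) : Set (ZMod (4 * h)))
      ⊆ S ∪ oddPart K) :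
    ∃ σ : Equiv.Perm (ZMod (4 * h)),
      σ 0 = 0 ∧
      σ (((2 * h : ℕ) : ZMod (4 * h))) ≠ ((2 * h : ℕ) : ZMod (4 * h)) ∧
      ∀ x y : ZMod (4 * h),
        (circulantGraph
          ((· + ((2 * h : ℕ) : ZMod (4 * h))) ''
            (S \ {((2 * h : ℕ) : ZMod (4 * h))}))).Adj x y ↔
        (circulantGraph
          ((· + ((2 * h : ℕ) : ZMod (4 * h))) ''
            (S \ {((2 * h : ℕ) : ZMod (4 * h))}))).Adj (σ x) (σ y) := by
  classical
  obtain ⟨k, hkodd, hkcard⟩ := hK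
  haveI hn : NeZero (4 * h) := ⟨by omega⟩
  set hc : ZMod (4 * h) := ((h : ℕ) : ZMod (4 * h)) with hhc
  set t2 : ZMod (4 * h) := hc + hc with hht2
  have ht2 : ((2 * h : ℕ) : ZMod (4 * h)) = t2 := by
    rw [hht2, hhc]; push_cast; ring
  have htt : t2 + t2 = 0 := by
    have h4 : ((4 * h : ℕ) : ZMod (4 * h)) = 0 := ZMod.natCast_self _
    rw [hht2, hhc]
    push_cast at h4 ⊢
    linear_combination h4
  -- classification of 2-torsion
  have two_tor : ∀ x : ZMod (4 * h), x + x = 0 → x = 0 ∨ x = t2 := by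
    intro x hx
    have hv : ((x.val : ℕ) : ZMod (4 * h)) = x := ZMod.natCast_rightInverse x
    have h2 : ((2 * x.val : ℕ) : ZMod (4 * h)) = 0 := by
      push_cast [hv]
      linear_combination hx
    have hdvd : (4 * h) ∣ 2 * x.val := by
      rwa [ZMod.natCast_eq_zero_iff] at h2
    have hvlt : x.val < 4 * h := ZMod.val_lt x
    obtain ⟨q, hq⟩ := hdvd
    have hqlt : q < 2 := by
      by_contra hq2
      push_neg at hq2
      have h1 : 4 * h * 2 ≤ 4 * h * q := Nat.mul_le_mul_left _ hq2
      linarith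
    interval_cases q
    · left
      have hv0 : x.val = 0 := by omega
      rw [← hv, hv0]; simp
    · right
      have hv0 : x.val = 2 * h := by omega
      rw [← hv, hv0, ht2]
  have card_smul : ∀ u : ZMod (4 * h), u ∈ K → (2 * k) • u = 0 := by
    intro u hu
    have h1 : (Nat.card K) • (⟨u, hu⟩ : K) = 0 := card_nsmul_eq_zero'
    rw [hkcard] at h1
    have h2 := congrArg (fun z : K => (z : ZMod (4 * h))) h1
    simpa using h2
  have hcK : hc ∉ K := by
    intro hmem
    have h1 := card_smul hc hmem
    rw [nsmul_eq_mul] at h1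
    rw [hhc] at h1
    have h2 : ((2 * k * h : ℕ) : ZMod (4 * h)) = 0 := by
      push_cast at h1 ⊢
      linear_combination h1
    have hdvd : (4 * h) ∣ 2 * k * h := by
      rwa [ZMod.natCast_eq_zero_iff] at h2
    obtain ⟨m, hm⟩ := hkodd
    rw [hm] at hdvd
    rw [show 2 * (2 * m + 1) * h = 4 * (m * h) + 2 * h from by ring] at hdvd
    have hd1 : (4 * h) ∣ 4 * (m * h) := ⟨m, by ring⟩
    have hd2 : (4 * h) ∣ 2 * h := (Nat.dvd_add_right hd1).mp hdvd
    have := Nat.le_of_dvd (by omega) hd2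
    omega
  have t2K : t2 ∈ K := by
    haveI : Fact (Nat.Prime 2) := ⟨Nat.prime_two⟩
    haveI : Fintype K := Fintype.ofFinite K
    obtain ⟨g, hg⟩ := exists_prime_addOrderOf_dvd_card (G := K) 2
      (by rw [← Nat.card_eq_fintype_card, hkcard]; exact ⟨k, rfl⟩)
    have hg2 : (2 : ℕ) • g = 0 := by rw [← hg]; exact addOrderOf_nsmul_eq_zero g
    have hgne : g ≠ 0 := by
      intro e
      rw [e] at hg
      simp at hg
    have hco : (g : ZMod (4 * h)) + (g : ZMod (4 * h)) = 0 := by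
      have := congrArg (fun z : K => (z : ZMod (4 * h))) hg2
      simpa [two_nsmul] using this
    rcases two_tor _ hco with e | e
    · exact absurd (Subtype.ext (by simpa using e)) hgne
    · rw [← e]; exact g.2
  have t2not2K : t2 ∉ twoMul K := by
    rintro ⟨c, hcm, hc2⟩
    have hc2' : 2 * c = t2 := hc2
    have h1 : (c - hc) + (c - hc) = 0 := by linear_combination hc2' + hht2
    rcases two_tor _ h1 with e | e
    · have hce : c = hc := by linear_combination e
      exact hcK (hce ▸ hcm)
    · have hce : hc = c - t2 := by linear_combination -e
      exact hcK (hce ▸ sub_mem hcm t2K)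
  have decomp : ∀ u : ZMod (4 * h), u ∈ K →
      ∃ c, c ∈ K ∧ (u = c + c ∨ u = c + c + t2) := by
    intro u hu
    obtain ⟨m, hm⟩ := hkodd
    set w : ZMod (4 * h) := k • u with hw
    have hww : w + w = 0 := by
      rw [hw, ← add_nsmul, show k + k = 2 * k from by ring]
      exact card_smul u hu
    refine ⟨(m + 1) • u, nsmul_mem hu (m + 1), ?_⟩
    set c : ZMod (4 * h) := (m + 1) • u with hcdef
    have hcc : c + c = u + w := by
      rw [hcdef, hw, ← add_nsmul, show (m + 1) + (m + 1) = 1 + k from by omega,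
        add_nsmul, one_nsmul]
    rcases two_tor _ hww with e | e
    · left; linear_combination -hcc - e
    · right; linear_combination -hcc - e - htt
  have ko_struct : ∀ u : ZMod (4 * h), u ∈ oddPart K →
      ∃ c, c ∈ K ∧ u = c + c + t2 := by
    intro u hu
    obtain ⟨c, hcm, hor⟩ := decomp u hu.1
    rcases hor with he | he
    · exact absurd ⟨c, hcm, by rw [he]; ring⟩ hu.2
    · exact ⟨c, hcm, he⟩
  have notK_notKo : ∀ u : ZMod (4 * h), u ∉ K → u ∉ oddPart K :=
    fun u hu hm => hu hm.1
  have addHc_notKo : ∀ u : ZMod (4 * h), u ∈ K → u + hc ∉ oddPart K := by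
    intro u hu hm
    refine hcK ?_
    have he : hc = (u + hc) - u := by ring
    rw [he]
    exact sub_mem hm.1 hu
  have subHc_notKo : ∀ u : ZMod (4 * h), u ∈ K → u - hc ∉ oddPart K := by
    intro u hu hm
    refine hcK ?_
    have he : hc = u - (u - hc) := by ring
    rw [he]
    exact sub_mem hu hm.1
  have t2Ko : t2 ∈ oddPart K := ⟨t2K, t2not2K⟩
  have zeroKo : (0 : ZMod (4 * h)) ∉ oddPart K :=
    fun hm => hm.2 ⟨0, zero_mem K, mul_zero 2⟩
  have L1 : ∀ c y : ZMod (4 * h), c ∈ K → y ∉ oddPart K → y + hc ∉ oddPart K →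
      (c + c - y ∉ oddPart K ∧ c + c - y - hc ∉ oddPart K) := by
    intro c y hcm hy1 hy2
    constructor
    · intro hm
      have hyK : y ∈ K := by
        have he : y = c + c - (c + c - y) := by ring
        rw [he]; exact sub_mem (add_mem hcm hcm) hm.1
      have hy2K : y ∈ twoMul K := by
        by_contra hno
        exact hy1 ⟨hyK, hno⟩
      obtain ⟨d, hdm, hdy⟩ := hy2K
      have hdy' : 2 * d = y := hdy
      exact hm.2 ⟨c - d, sub_mem hcm hdm, by linear_combination -hdy'⟩
    · intro hm
      have hyK : y + hc ∈ K := by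
        have he : y + hc = c + c - (c + c - y - hc) := by ring
        rw [he]; exact sub_mem (add_mem hcm hcm) hm.1
      have hy2K : y + hc ∈ twoMul K := by
        by_contra hno
        exact hy2 ⟨hyK, hno⟩
      obtain ⟨d, hdm, hdy⟩ := hy2K
      have hdy' : 2 * d = y + hc := hdy
      exact hm.2 ⟨c - d, sub_mem hcm hdm, by linear_combination -hdy'⟩
  have swapS : ∀ u w : ZMod (4 * h), u ∉ oddPart K → w ∉ oddPart K →
      w - u ∈ AddSubgroup.zmultiples hc → (u ∈ S ↔ w ∈ S) := by
    intro u w hu hw hm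
    constructor
    · intro huS
      have hstep := hsub (Set.add_mem_add (show u ∈ S \ oddPart K from ⟨huS, hu⟩) hm)
      rw [show u + (w - u) = w from by ring] at hstep
      exact hstep.resolve_right hw
    · intro hwS
      have hm' : u - w ∈ AddSubgroup.zmultiples hc := by
        rw [show u - w = -(w - u) from by ring]
        exact neg_mem hm
      have hstep := hsub (Set.add_mem_add (show w ∈ S \ oddPart K from ⟨hwS, hw⟩) hm')
      rw [show w + (u - w) = u from by ring] at hstep
      exact hstep.resolve_right hu
  have Psymm : ∀ a b : ZMod (4 * h), (a - b + t2 ∈ S ↔ b - a + t2 ∈ S) := by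
    intro a b
    constructor
    · intro hm
      have := hS _ hm
      rwa [show -(a - b + t2) = b - a + t2 from by linear_combination -htt] at this
    · intro hm
      have := hS _ hm
      rwa [show -(b - a + t2) = a - b + t2 from by linear_combination -htt] at this
  -- the three basic moved/fixed cases
  have case_mf : ∀ x y : ZMod (4 * h), x ∈ oddPart K → y ∉ oddPart K →
      y + hc ∉ oddPart K → (x - y + t2 ∈ S ↔ (x - hc) - y + t2 ∈ S) := by
    intro x y hx hy1 hy2
    obtain ⟨c, hcm, hxe⟩ := ko_struct x hx
    obtain ⟨hu, hw⟩ := L1 c y hcm hy1 hy2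
    have e1 : x - y + t2 = c + c - y := by rw [hxe]; linear_combination htt
    have e2 : (x - hc) - y + t2 = c + c - y - hc := by rw [hxe]; linear_combination htt
    rw [e1, e2]
    refine swapS _ _ hu hw ?_
    rw [show (c + c - y - hc) - (c + c - y) = -hc from by ring]
    exact neg_mem (AddSubgroup.mem_zmultiples hc)
  have case_pf : ∀ x y : ZMod (4 * h), x + hc ∈ oddPart K → y ∉ oddPart K →
      y + hc ∉ oddPart K → (x - y + t2 ∈ S ↔ (x + hc) - y + t2 ∈ S) := by
    intro x y hx hy1 hy2
    obtain ⟨c, hcm, hxe⟩ := ko_struct (x + hc) hx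
    obtain ⟨hu, hw⟩ := L1 c y hcm hy1 hy2
    have hxe' : x = c + c + t2 - hc := by linear_combination hxe
    have e1 : x - y + t2 = c + c - y - hc := by rw [hxe']; linear_combination htt
    have e2 : (x + hc) - y + t2 = c + c - y := by rw [hxe]; linear_combination htt
    rw [e1, e2]
    refine swapS _ _ hw hu ?_
    rw [show (c + c - y) - (c + c - y - hc) = hc from by ring]
    exact AddSubgroup.mem_zmultiples hc
  have case_mp : ∀ x y : ZMod (4 * h), x ∈ oddPart K → y + hc ∈ oddPart K →
      (x - y + t2 ∈ S ↔ (x - hc) - (y + hc) + t2 ∈ S) := by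
    intro x y hx hy
    obtain ⟨c, hcm, hxe⟩ := ko_struct x hx
    obtain ⟨d, hdm, hye⟩ := ko_struct (y + hc) hy
    have hye' : y = d + d + t2 - hc := by linear_combination hye
    set A : ZMod (4 * h) := (c - d) + (c - d) + t2 with hA
    have hAK : A ∈ K :=
      add_mem (add_mem (sub_mem hcm hdm) (sub_mem hcm hdm)) t2K
    have e1 : x - y + t2 = A + hc := by rw [hxe, hye', hA]; ring
    have e2 : (x - hc) - (y + hc) + t2 = A - hc := by rw [hxe, hye, hA]; ring
    rw [e1, e2]
    refine swapS _ _ (addHc_notKo A hAK) (subHc_notKo A hAK) ?_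
    rw [show (A - hc) - (A + hc) = -(hc + hc) from by ring]
    exact neg_mem (add_mem (AddSubgroup.mem_zmultiples hc) (AddSubgroup.mem_zmultiples hc))
  -- the permutation
  set f : ZMod (4 * h) → ZMod (4 * h) :=
    fun x => if x ∈ oddPart K then x - hc else if x + hc ∈ oddPart K then x + hc else x
    with hf
  have hfm : ∀ x, x ∈ oddPart K → f x = x - hc := by
    intro x hx
    simp only [hf]
    rw [if_pos hx]
  have hfp : ∀ x, x ∉ oddPart K → x + hc ∈ oddPart K → f x = x + hc := by
    intro x hx1 hx2
    simp only [hf]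
    rw [if_neg hx1, if_pos hx2]
  have hff : ∀ x, x ∉ oddPart K → x + hc ∉ oddPart K → f x = x := by
    intro x hx1 hx2
    simp only [hf]
    rw [if_neg hx1, if_neg hx2]
  have hinv : Function.Involutive f := by
    intro x
    by_cases h1 : x ∈ oddPart K
    · rw [hfm x h1]
      have hx1 : x - hc ∉ oddPart K := by
        intro hm
        refine hcK ?_
        have he : hc = x - (x - hc) := by ring
        rw [he]
        exact sub_mem h1.1 hm.1
      have hx2 : x - hc + hc ∈ oddPart K := by
        rw [sub_add_cancel]; exact h1
      rw [hfp _ hx1 hx2, sub_add_cancel]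
    · by_cases h2 : x + hc ∈ oddPart K
      · rw [hfp x h1 h2, hfm _ h2, add_sub_cancel_right]
      · rw [hff x h1 h2, hff x h1 h2]
  have keyP : ∀ x y : ZMod (4 * h), (x - y + t2 ∈ S ↔ f x - f y + t2 ∈ S) := by
    intro x y
    by_cases hx1 : x ∈ oddPart K
    · by_cases hy1 : y ∈ oddPart K
      · rw [hfm x hx1, hfm y hy1, show (x - hc) - (y - hc) = x - y from by ring]
      · by_cases hy2 : y + hc ∈ oddPart K
        · rw [hfm x hx1, hfp y hy1 hy2]
          exact case_mp x y hx1 hy2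
        · rw [hfm x hx1, hff y hy1 hy2]
          exact case_mf x y hx1 hy1 hy2
    · by_cases hx2 : x + hc ∈ oddPart K
      · by_cases hy1 : y ∈ oddPart K
        · rw [hfp x hx1 hx2, hfm y hy1]
          calc x - y + t2 ∈ S ↔ y - x + t2 ∈ S := Psymm x y
            _ ↔ (y - hc) - (x + hc) + t2 ∈ S := case_mp y x hy1 hx2
            _ ↔ (x + hc) - (y - hc) + t2 ∈ S := Psymm _ _
        · by_cases hy2 : y + hc ∈ oddPart K
          · rw [hfp x hx1 hx2, hfp y hy1 hy2,
              show (x + hc) - (y + hc) = x - y from by ring]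
          · rw [hfp x hx1 hx2, hff y hy1 hy2]
            exact case_pf x y hx2 hy1 hy2
      · by_cases hy1 : y ∈ oddPart K
        · rw [hff x hx1 hx2, hfm y hy1]
          calc x - y + t2 ∈ S ↔ y - x + t2 ∈ S := Psymm x y
            _ ↔ (y - hc) - x + t2 ∈ S := case_mf y x hy1 hx1 hx2
            _ ↔ x - (y - hc) + t2 ∈ S := Psymm _ _
        · by_cases hy2 : y + hc ∈ oddPart K
          · rw [hff x hx1 hx2, hfp y hy1 hy2]
            calc x - y + t2 ∈ S ↔ y - x + t2 ∈ S := Psymm x y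
              _ ↔ (y + hc) - x + t2 ∈ S := case_pf y x hy2 hx1 hx2
              _ ↔ x - (y + hc) + t2 ∈ S := Psymm _ _
          · rw [hff x hx1 hx2, hff y hy1 hy2]
  have hc0 : hc ≠ 0 := by
    intro e
    rw [hhc] at e
    have hdvd : (4 * h) ∣ h := by
      rwa [ZMod.natCast_eq_zero_iff] at e
    have := Nat.le_of_dvd hh hdvd
    omega
  refine ⟨Function.Involutive.toPerm f hinv, ?_, ?_, ?_⟩
  · show f 0 = 0
    have h02 : (0 : ZMod (4 * h)) + hc ∉ oddPart K := by
      rw [zero_add]; exact notK_notKo hc hcK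
    exact hff 0 zeroKo h02
  · show f ((2 * h : ℕ) : ZMod (4 * h)) ≠ ((2 * h : ℕ) : ZMod (4 * h))
    rw [ht2, hfm t2 t2Ko]
    intro e
    exact hc0 (by linear_combination -e)
  · intro x y
    simp only [Function.Involutive.coe_toPerm]
    by_cases hxy : x = y
    · subst hxy
      exact iff_of_false (fun ha => ha.ne rfl) (fun ha => ha.ne rfl)
    · have hfxy : f x ≠ f y := fun e => hxy (hinv.injective e)
      have memT : ∀ d : ZMod (4 * h), d ≠ 0 →
          (d ∈ ((· + ((2 * h : ℕ) : ZMod (4 * h))) ''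
            (S \ {((2 * h : ℕ) : ZMod (4 * h))})) ↔ d + t2 ∈ S) := by
        intro d hd
        constructor
        · rintro ⟨s, ⟨hsS, hsne⟩, hse⟩
          have hse' : s + ((2 * h : ℕ) : ZMod (4 * h)) = d := hse
          rw [ht2] at hse'
          have he : s = d + t2 := by linear_combination hse' - htt
          rwa [← he]
        · intro hm
          refine ⟨d + t2, ⟨hm, ?_⟩, ?_⟩
          · simp only [Set.mem_singleton_iff, ht2]
            intro e
            exact hd (by linear_combination e)
          · show d + t2 + ((2 * h : ℕ) : ZMod (4 * h)) = d
            rw [ht2]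
            linear_combination htt
      have adjiff : ∀ a b : ZMod (4 * h), a ≠ b →
          ((circulantGraph ((· + ((2 * h : ℕ) : ZMod (4 * h))) ''
            (S \ {((2 * h : ℕ) : ZMod (4 * h))}))).Adj a b ↔
            (a - b + t2 ∈ S ∨ b - a + t2 ∈ S)) := by
        intro a b hab
        rw [circulantGraph_adj]
        rw [memT _ (sub_ne_zero_of_ne hab), memT _ (sub_ne_zero_of_ne (Ne.symm hab))]
        simp [hab]
      rw [adjiff x y hxy, adjiff (f x) (f y) hfxy]
      exact or_congr (keyP x y) (keyP y x)
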